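/- The identity ∑_{j∈ℤ} sinc²(x + jπ) = 1 holds for all real x, where sinc(x) = sin(x)/x and sinc(0) = 1. -/

import Mathlib

open Real hiding sinc sinc_zero continuous_sinc

/-- `sinc x = sin x / x`, with `sinc 0 = 1`. -/
noncomputable def sinc (x : ℝ) : ℝ := if x = 0 then 1 else Real.sin x / x

lemma sinc_zero : sinc 0 = 1 := if_pos rfl

lemma sinc_of_ne {x : ℝ} (hx : x ≠ 0) : sinc x = Real.sin x / x := if_neg hx

lemma continuous_sinc : Continuous sinc := by
  rw [continuous_iff_continuousAt]
  intro x
  rcases eq_or_ne x 0 with rfl | hx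
  · have h2 : Filter.Tendsto sinc (nhdsWithin 0 {0}ᶜ) (nhds 1) := by
      have := (Real.hasDerivAt_sin 0)
      rw [hasDerivAt_iff_tendsto_slope] at this
      simp only [Real.cos_zero] at this
      refine this.congr' ?_
      filter_upwards [self_mem_nhdsWithin] with y hy
      simp [slope_def_field, sinc_of_ne hy, div_eq_mul_inv, mul_comm]
    rw [ContinuousAt, sinc_zero, ← nhdsNE_sup_pure, Filter.tendsto_sup]
    refine ⟨h2, ?_⟩
    rw [Filter.tendsto_pure_left]
    intro s hs
    exact mem_of_mem_nhds (by simpa [sinc_zero] using hs)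
  · have h : ∀ᶠ y in nhds x, Real.sin y / y = sinc y := by
      filter_upwards [isOpen_ne.mem_nhds hx] with y hy using (sinc_of_ne hy).symm
    exact ContinuousAt.congr ((Real.continuous_sin.continuousAt).div continuousAt_id hx) h

lemma sinc_sq_le_one (x : ℝ) : sinc x ^ 2 ≤ 1 := by
  rcases eq_or_ne x 0 with h | h
  · simp [h, sinc_zero]
  · rw [sinc_of_ne h, div_pow, div_le_one (by positivity)]
    exact Real.sin_sq_le_sq

lemma sinc_sq_le_inv_sq {x : ℝ} (hx : x ≠ 0) : sinc x ^ 2 ≤ (x ^ 2)⁻¹ := by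
  rw [sinc_of_ne hx, div_pow, div_eq_mul_inv]
  have h1 : Real.sin x ^ 2 ≤ 1 := Real.sin_sq_le_one x
  have h2 : (0:ℝ) < (x^2)⁻¹ := by positivity
  nlinarith

lemma summable_inv_int_sq : Summable (fun j : ℤ => ((j:ℝ)^2)⁻¹) := by
  simpa [one_div] using Real.summable_one_div_int_pow.mpr (by norm_num : 1 < 2)

lemma summable_sinc_sq (x : ℝ) : Summable (fun j : ℤ => sinc (x + j * π) ^ 2) := by
  set N : ℕ := ⌈|x|⌉₊ with hN
  set s : Set ℤ := ↑(Finset.Icc (-(N:ℤ)) N) with hs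
  rw [← summable_subtype_and_compl (s := s)]
  constructor
  · exact Summable.of_finite
  · refine Summable.of_nonneg_of_le (fun j => by positivity) ?_
      ((summable_inv_int_sq).subtype sᶜ)
    intro ⟨j, hj⟩
    simp only [hs, Set.mem_compl_iff, Finset.coe_Icc, Set.mem_Icc, not_and_or, not_le] at hj
    have hjabs : (N:ℤ) < |j| := by
      rcases hj with h | h
      · rw [abs_of_neg (by omega)]; omega
      · rw [abs_of_pos (by omega)]; omega
    have hxN : |x| ≤ (N:ℝ) := Nat.le_ceil _
    have hjr : (N:ℝ) + 1 ≤ |(j:ℝ)| := by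
      rw [← Int.cast_abs]
      exact_mod_cast hjabs
    have hpi : (3:ℝ) < π := Real.pi_gt_three
    have hja : (0:ℝ) < |(j:ℝ)| := by linarith [Nat.cast_nonneg (α := ℝ) N]
    have key : |(j:ℝ)| ≤ |x + j * π| := by
      have h1 : |(j:ℝ) * π| - |x| ≤ |x + j * π| := by
        have := abs_sub_abs_le_abs_sub ((j:ℝ)*π) (-x)
        simp only [abs_neg, sub_neg_eq_add] at this
        linarith [this, (by ring_nf : (j:ℝ)*π + x = x + j*π) ▸ this]
      have h2 : |(j:ℝ) * π| = |(j:ℝ)| * π := by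
        rw [abs_mul, abs_of_pos (by linarith : (0:ℝ) < π)]
      nlinarith
    have hne : x + j * π ≠ 0 := by
      intro h
      rw [h, abs_zero] at key
      linarith
    refine (sinc_sq_le_inv_sq hne).trans ?_
    apply inv_anti₀ (by rw [← sq_abs]; nlinarith)
    calc (j:ℝ)^2 = |(j:ℝ)|^2 := (sq_abs _).symm
      _ ≤ |x + j*π|^2 := by nlinarith
      _ = (x + j*π)^2 := sq_abs _

lemma neg_one_zpow_sq (k : ℤ) : ((-1:ℝ) ^ k) ^ 2 = 1 := by
  rcases Int.even_or_odd k with h | h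
  · rw [h.neg_one_zpow]; norm_num
  · rw [h.neg_one_zpow]; norm_num

lemma sin_sq_add_int_mul_pi (x : ℝ) (n : ℤ) : Real.sin (x + n * π) ^ 2 = Real.sin x ^ 2 := by
  rw [Real.sin_add_int_mul_pi, mul_pow, neg_one_zpow_sq, one_mul]

lemma sin_double (x : ℝ) : Real.sin x = 2 * Real.sin (x/2) * Real.cos (x/2) := by
  have := Real.sin_two_mul (x/2)
  rw [show 2*(x/2) = x by ring] at this
  exact this

lemma even_term (x : ℝ) (k : ℤ) :
    Real.cos (x/2) ^ 2 * sinc (x/2 + k * π) ^ 2 = sinc (x + (2*k) * π) ^ 2 := by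
  have hy2 : x/2 + k * π = (x + (2*k) * π) / 2 := by push_cast; ring
  rcases eq_or_ne (x + (2*k) * π) 0 with hy | hy
  · have hx2 : x/2 + k * π = 0 := by rw [hy2, hy]; ring
    have hx : x/2 = -((k:ℝ) * π) := by linarith
    rw [hy, hx2, sinc_zero, hx, Real.cos_neg]
    have h1 : Real.sin ((k:ℝ) * π) = 0 := Real.sin_int_mul_pi k
    have h2 := Real.sin_sq_add_cos_sq ((k:ℝ) * π)
    nlinarith
  · have hz : x/2 + k * π ≠ 0 := by rw [hy2]; exact div_ne_zero hy two_ne_zero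
    have h2 := sin_sq_add_int_mul_pi x (2*k)
    push_cast at h2
    rw [sinc_of_ne hz, sinc_of_ne hy, div_pow, div_pow,
      sin_sq_add_int_mul_pi (x/2) k, h2, hy2]
    rw [sin_double x]
    field_simp

lemma odd_term (x : ℝ) (k : ℤ) :
    Real.sin (x/2) ^ 2 * sinc ((x+π)/2 + k * π) ^ 2 = sinc (x + (2*k+1) * π) ^ 2 := by
  have hy2 : (x+π)/2 + k * π = (x + (2*k+1) * π) / 2 := by push_cast; ring
  have hcos : Real.sin ((x+π)/2) = Real.cos (x/2) := by
    rw [show (x+π)/2 = x/2 + π/2 by ring, Real.sin_add_pi_div_two]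
  rcases eq_or_ne (x + (2*k+1) * π) 0 with hy | hy
  · have hx2 : (x+π)/2 + k * π = 0 := by rw [hy2, hy]; ring
    have hc : Real.cos (x/2) = 0 := by
      rw [← hcos, show (x+π)/2 = -((k:ℝ)*π) from by linarith, Real.sin_neg,
        Real.sin_int_mul_pi k, neg_zero]
    rw [hy, hx2, sinc_zero]
    have := Real.sin_sq_add_cos_sq (x/2)
    nlinarith
  · have hz : (x+π)/2 + k * π ≠ 0 := by rw [hy2]; exact div_ne_zero hy two_ne_zero
    have h2 := sin_sq_add_int_mul_pi x (2*k+1)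
    push_cast at h2
    rw [sinc_of_ne hz, sinc_of_ne hy, div_pow, div_pow,
      sin_sq_add_int_mul_pi ((x+π)/2) k, h2, hy2]
    rw [show Real.sin ((x+π)/2)^2 = Real.cos (x/2)^2 from by rw [hcos], sin_double x]
    field_simp

lemma hasSum_int_even_add_odd {f : ℤ → ℝ} {a b : ℝ}
    (he : HasSum (fun k : ℤ => f (2*k)) a) (ho : HasSum (fun k : ℤ => f (2*k+1)) b) :
    HasSum f (a + b) := by
  have h2 : Function.Injective (fun k : ℤ => 2*k) := fun a b h => by simpa using h
  have h21 : Function.Injective (fun k : ℤ => 2*k+1) := fun a b h => by simpa using h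
  have hre : Set.range (fun k : ℤ => 2*k) = {n : ℤ | Even n} := by
    ext n
    constructor
    · rintro ⟨k, rfl⟩; exact ⟨k, by ring⟩
    · rintro ⟨r, rfl⟩; exact ⟨r, by ring⟩
  have hro : Set.range (fun k : ℤ => 2*k+1) = {n : ℤ | Odd n} := by
    ext n
    simp [Odd, eq_comm]
  exact (h2.hasSum_range_iff.2 he).add_isCompl
    (hre ▸ hro ▸ Int.isCompl_even_odd) (h21.hasSum_range_iff.2 ho)

lemma feq (x : ℝ) :
    ∑' j : ℤ, sinc (x + j*π)^2
      = Real.cos (x/2)^2 * ∑' j : ℤ, sinc (x/2 + j*π)^2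
        + Real.sin (x/2)^2 * ∑' j : ℤ, sinc ((x+π)/2 + j*π)^2 := by
  set f : ℤ → ℝ := fun j => sinc (x + j*π)^2 with hf
  have h2 : Function.Injective (fun k : ℤ => 2*k) := fun a b h => by simpa using h
  have h21 : Function.Injective (fun k : ℤ => 2*k+1) := fun a b h => by simpa using h
  have hse : Summable (f ∘ fun k : ℤ => 2*k) := (summable_sinc_sq x).comp_injective h2
  have hso : Summable (f ∘ fun k : ℤ => 2*k+1) := (summable_sinc_sq x).comp_injective h21
  have htot : HasSum f ((∑' k : ℤ, f (2*k)) + ∑' k : ℤ, f (2*k+1)) :=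
    hasSum_int_even_add_odd hse.hasSum hso.hasSum
  rw [htot.tsum_eq]
  congr 1
  · rw [← tsum_mul_left]
    apply tsum_congr
    intro k
    have := even_term x k
    rw [this, hf]
    push_cast
    ring_nf
  · rw [← tsum_mul_left]
    apply tsum_congr
    intro k
    have := odd_term x k
    rw [this, hf]
    push_cast
    ring_nf

lemma periodic_aux (x : ℝ) :
    ∑' j : ℤ, sinc ((x + π) + j*π)^2 = ∑' j : ℤ, sinc (x + j*π)^2 := by
  have h := (Equiv.addRight (1:ℤ)).tsum_eq (fun j : ℤ => sinc (x + j*π)^2)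
  rw [← h]
  apply tsum_congr
  intro j
  simp only [Equiv.coe_addRight]
  congr 2
  push_cast
  ring

lemma F_zero : ∑' j : ℤ, sinc ((0:ℝ) + j*π)^2 = 1 := by
  rw [tsum_eq_single 0]
  · norm_num [sinc_zero]
  · intro j hj
    have hπ : ((j:ℝ)) * π ≠ 0 :=
      mul_ne_zero (Int.cast_ne_zero.mpr hj) Real.pi_ne_zero
    rw [zero_add, sinc_of_ne hπ]
    simp [Real.sin_int_mul_pi j]

lemma contOn_F : ContinuousOn (fun x : ℝ => ∑' j : ℤ, sinc (x + j*π)^2) (Set.Icc 0 π) := by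
  have hpi : (3:ℝ) < π := Real.pi_gt_three
  have hpi4 : π < 4 := by linarith [Real.pi_lt_d2]
  set u : ℤ → ℝ := fun j => (if |j| ≤ 2 then (1:ℝ) else 0) + ((j:ℝ)^2)⁻¹ with hu
  have hus : Summable u := by
    apply Summable.add ?_ summable_inv_int_sq
    apply summable_of_ne_finset_zero (s := Finset.Icc (-2 : ℤ) 2)
    intro j hj
    simp only [Finset.mem_Icc] at hj
    rw [if_neg (by rw [abs_le]; omega)]
  refine continuousOn_tsum (fun j => ?_) hus (fun j x hx => ?_)
  · exact ((continuous_sinc.comp (continuous_id.add continuous_const)).pow 2).continuousOn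
  · obtain ⟨hx0, hxpi⟩ := hx
    rw [Real.norm_eq_abs, abs_of_nonneg (sq_nonneg _)]
    by_cases hj : |j| ≤ 2
    · rw [hu]
      simp only [if_pos hj]
      have := sinc_sq_le_one (x + j*π)
      linarith [sinc_sq_le_one (x + j*π), inv_nonneg.mpr (sq_nonneg ((j:ℝ)))]
    · have hj3 : (3:ℤ) ≤ |j| := by omega
      have hjr : (3:ℝ) ≤ |(j:ℝ)| := by rw [← Int.cast_abs]; exact_mod_cast hj3
      have key : |(j:ℝ)| ≤ |x + j * π| := by
        have h1 := abs_sub_abs_le_abs_sub ((j:ℝ)*π) (-x)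
        simp only [abs_neg, sub_neg_eq_add] at h1
        have h2 : |(j:ℝ) * π| = |(j:ℝ)| * π := by
          rw [abs_mul, abs_of_pos (by linarith : (0:ℝ) < π)]
        have h3 : (j:ℝ)*π + x = x + j*π := by ring
        rw [h3, h2] at h1
        have hxa : |x| ≤ 4 := by rw [abs_of_nonneg hx0]; linarith
        nlinarith
      have hne : x + j*π ≠ 0 := by
        intro h
        rw [h, abs_zero] at key
        linarith
      refine (sinc_sq_le_inv_sq hne).trans ?_
      have h4 : ((j:ℝ)^2)⁻¹ ≤ u j := by
        rw [hu]; simp only [if_neg hj]; norm_num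
      refine le_trans ?_ h4
      apply inv_anti₀ (by rw [← sq_abs]; nlinarith)
      calc (j:ℝ)^2 = |(j:ℝ)|^2 := (sq_abs _).symm
        _ ≤ |x + j*π|^2 := by nlinarith
        _ = (x + j*π)^2 := sq_abs _

lemma herglotz {F : ℝ → ℝ}
    (hF : ContinuousOn F (Set.Icc 0 π))
    (heq : ∀ x, F x = Real.cos (x/2)^2 * F (x/2) + Real.sin (x/2)^2 * F ((x+π)/2))
    {x0 : ℝ} (hx0 : x0 ∈ Set.Ico 0 π)
    (hmax : ∀ y ∈ Set.Icc 0 π, F y ≤ F x0) : F x0 = F 0 := by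
  have hpi : 0 < π := Real.pi_pos
  set M := F x0 with hM
  have step : ∀ y ∈ Set.Ico 0 π, F y = M → (y/2 ∈ Set.Ico 0 π ∧ F (y/2) = M) := by
    intro y hy hFy
    have hy2 : y/2 ∈ Set.Ico 0 π := ⟨by linarith [hy.1], by linarith [hy.2, hpi]⟩
    refine ⟨hy2, ?_⟩
    have hc : (0:ℝ) < Real.cos (y/2) := by
      apply Real.cos_pos_of_mem_Ioo
      constructor
      · linarith [hy.1, hpi]
      · linarith [hy.2]
    have h1 : F (y/2) ≤ M := hmax _ ⟨by linarith [hy.1], by linarith [hy.2, hpi]⟩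
    have h2 : F ((y+π)/2) ≤ M := hmax _ ⟨by linarith [hy.1, hpi], by linarith [hy.2]⟩
    have heqy := heq y
    rw [hFy] at heqy
    have hcs := Real.sin_sq_add_cos_sq (y/2)
    have hc2 : (0:ℝ) < Real.cos (y/2)^2 := by positivity
    have hs2 : (0:ℝ) ≤ Real.sin (y/2)^2 := sq_nonneg _
    refine le_antisymm h1 ?_
    by_contra hlt
    push_neg at hlt
    have e3 : Real.cos (y/2)^2 * M + Real.sin (y/2)^2 * M = M := by
      rw [← add_mul, add_comm, hcs, one_mul]
    linarith [mul_lt_mul_of_pos_left hlt hc2, mul_le_mul_of_nonneg_left h2 hs2, e3, heqy]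
  have seq : ∀ n : ℕ, x0 / 2^n ∈ Set.Ico 0 π ∧ F (x0 / 2^n) = M := by
    intro n
    induction n with
    | zero => simpa [hM] using hx0
    | succ n ih =>
      have h := step _ ih.1 ih.2
      have harg : x0 / 2^(n+1) = (x0/2^n)/2 := by rw [pow_succ]; ring
      rw [harg]
      exact h
  have hlim : Filter.Tendsto (fun n : ℕ => x0 / 2^n) Filter.atTop (nhds 0) := by
    have h := tendsto_pow_atTop_nhds_zero_of_lt_one (by norm_num : (0:ℝ) ≤ 1/2) (by norm_num : (1/2:ℝ) < 1)
    have := h.const_mul x0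
    rw [mul_zero] at this
    refine this.congr fun n => ?_
    rw [div_pow]
    ring
  have h0 : Filter.Tendsto (fun n : ℕ => F (x0/2^n)) Filter.atTop (nhds (F 0)) := by
    apply (hF 0 ⟨le_refl 0, le_of_lt hpi⟩).tendsto.comp
    rw [tendsto_nhdsWithin_iff]
    exact ⟨hlim, Filter.Eventually.of_forall fun n => Set.Ico_subset_Icc_self (seq n).1⟩
  have hconst : Filter.Tendsto (fun n : ℕ => F (x0/2^n)) Filter.atTop (nhds M) := by
    have : (fun n : ℕ => F (x0/2^n)) = fun _ => M := funext fun n => (seq n).2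
    rw [this]
    exact tendsto_const_nhds
  exact tendsto_nhds_unique hconst h0


lemma F_periodic : Function.Periodic (fun y : ℝ => ∑' j : ℤ, sinc (y + j*π)^2) π :=
  fun y => periodic_aux y

/-- The identity `∑_{j∈ℤ} sinc²(x + jπ) = 1` holds for all real `x`. -/
theorem sinc_sq_sum (x : ℝ) : ∑' j : ℤ, (sinc (x + j * Real.pi)) ^ 2 = 1 := by
  set F : ℝ → ℝ := fun y => ∑' j : ℤ, sinc (y + j*π)^2 with hFdef
  have hpi : (0:ℝ) < π := Real.pi_pos
  have hper : Function.Periodic F π := F_periodic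
  have hFpi0 : F π = F 0 := by
    have := hper 0
    rw [zero_add] at this
    exact this
  have hcont : ContinuousOn F (Set.Icc 0 π) := contOn_F
  have heqF : ∀ z, F z = Real.cos (z/2)^2 * F (z/2) + Real.sin (z/2)^2 * F ((z+π)/2) :=
    fun z => feq z
  have hF0 : F 0 = 1 := F_zero
  -- reduce to a point in [0, π)
  obtain ⟨y, hy, hxy⟩ := hper.exists_mem_Ico₀ hpi x
  -- maximum
  obtain ⟨a, ha, hamax⟩ := isCompact_Icc.exists_isMaxOn
    (Set.nonempty_Icc.mpr (le_of_lt hpi)) hcont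
  obtain ⟨b, hb, hbmin⟩ := isCompact_Icc.exists_isMinOn
    (Set.nonempty_Icc.mpr (le_of_lt hpi)) hcont
  have hamax' : ∀ z ∈ Set.Icc 0 π, F z ≤ F a := fun z hz => hamax hz
  have hbmin' : ∀ z ∈ Set.Icc 0 π, F b ≤ F z := fun z hz => hbmin hz
  -- adjust endpoints
  have hmaxeq : F a = 1 := by
    rcases eq_or_ne a π with rfl | hne
    · -- use 0 as maximizer
      have h0max : ∀ z ∈ Set.Icc 0 π, F z ≤ F 0 := by
        intro z hz
        rw [← hFpi0]
        exact hamax' z hz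
      have := herglotz hcont heqF (x0 := 0) ⟨le_refl 0, hpi⟩ h0max
      rw [hFpi0, this, hF0]
    · have haIco : a ∈ Set.Ico 0 π := ⟨ha.1, lt_of_le_of_ne ha.2 hne⟩
      rw [herglotz hcont heqF haIco hamax', hF0]
  have hmineq : F b = 1 := by
    set G : ℝ → ℝ := fun z => 2 - F z with hGdef
    have hGcont : ContinuousOn G (Set.Icc 0 π) := continuousOn_const.sub hcont
    have hGeq : ∀ z, G z = Real.cos (z/2)^2 * G (z/2) + Real.sin (z/2)^2 * G ((z+π)/2) := by
      intro z
      have hcs := Real.sin_sq_add_cos_sq (z/2)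
      have := heqF z
      simp only [hGdef]
      nlinarith [this, hcs]
    have hGmax : ∀ z ∈ Set.Icc 0 π, G z ≤ G b := by
      intro z hz
      simp only [hGdef]
      linarith [hbmin' z hz]
    have hG0 : G 0 = 1 := by simp only [hGdef]; rw [hF0]; norm_num
    have hGpi0 : G π = G 0 := by simp [hGdef, hFpi0]
    rcases eq_or_ne b π with rfl | hne
    · have h0max : ∀ z ∈ Set.Icc 0 π, G z ≤ G 0 := by
        intro z hz
        rw [← hGpi0]
        exact hGmax z hz
      have := herglotz hGcont hGeq (x0 := 0) ⟨le_refl 0, hpi⟩ h0max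
      have : G π = 1 := by rw [hGpi0, this, hG0]
      simp only [hGdef] at this
      linarith
    · have hbIco : b ∈ Set.Ico 0 π := ⟨hb.1, lt_of_le_of_ne hb.2 hne⟩
      have := herglotz hGcont hGeq hbIco hGmax
      rw [hG0] at this
      simp only [hGdef] at this
      linarith
  have hy1 : F y = 1 := le_antisymm (hmaxeq ▸ hamax' y (Set.Ico_subset_Icc_self hy))
    (hmineq ▸ hbmin' y (Set.Ico_subset_Icc_self hy))
  calc ∑' j : ℤ, (sinc (x + j * Real.pi)) ^ 2 = F x := rfl
    _ = F y := hxy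
    _ = 1 := hy1
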